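/- Let n ≥ 2, let d_t, d_s ≥ 0 and r ≥ 0 be integers and d₁, …, d_r positive integers with d_t + d_s + 2(d₁ + ⋯ + d_r) = n, and suppose d_t ≠ n and d_s ≠ n. Then −1 + d_t(d_t + 1)/2 + d_s(d_s + 1)/2 + (d₁² + ⋯ + d_r²) ≤ n(n−1)/2, with equality if and only if r = 0 and {d_t, d_s} = {1, n−1} as a multiset. -/

import Mathlib

/-- arithmetic inequality for fixed point sets in the symmetric space of
`SL(n,ℝ)`:  if `d_t + d_s + 2(d₁ + ⋯ + d_r) = n` with `d_t, d_s ≠ n` and all `dᵢ > 0`, then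
`−1 + d_t(d_t+1)/2 + d_s(d_s+1)/2 + ∑ dᵢ² ≤ n(n−1)/2`, with equality iff `r = 0` and
`{d_t, d_s} = {1, n−1}` as a multiset. -/
theorem slnr_fixed_point_dim_bound (n : ℕ) (hn : 2 ≤ n) (dt ds r : ℕ)
    (d : Fin r → ℕ) (hd : ∀ i, 0 < d i)
    (hsum : dt + ds + 2 * ∑ i, d i = n) (hdt : dt ≠ n) (hds : ds ≠ n) :
    ((-1 : ℚ) + (dt : ℚ) * ((dt : ℚ) + 1) / 2 + (ds : ℚ) * ((ds : ℚ) + 1) / 2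
        + ∑ i, (d i : ℚ) ^ 2 ≤ (n : ℚ) * ((n : ℚ) - 1) / 2) ∧
    (((-1 : ℚ) + (dt : ℚ) * ((dt : ℚ) + 1) / 2 + (ds : ℚ) * ((ds : ℚ) + 1) / 2
        + ∑ i, (d i : ℚ) ^ 2 = (n : ℚ) * ((n : ℚ) - 1) / 2) ↔
      (r = 0 ∧ ((dt = 1 ∧ ds = n - 1) ∨ (dt = n - 1 ∧ ds = 1)))) := by
  rcases Nat.eq_zero_or_pos r with hr | hr
  · subst hr
    simp only [Finset.univ_eq_empty, Finset.sum_empty, Nat.mul_zero, Nat.add_zero] at hsum ⊢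
    have hdt1 : 1 ≤ dt := by omega
    have hds1 : 1 ≤ ds := by omega
    have hn' : (n : ℚ) = (dt : ℚ) + (ds : ℚ) := by exact_mod_cast hsum.symm
    have ha : (1 : ℚ) ≤ (dt : ℚ) := by exact_mod_cast hdt1
    have hb : (1 : ℚ) ≤ (ds : ℚ) := by exact_mod_cast hds1
    constructor
    · rw [hn']
      nlinarith [mul_nonneg (sub_nonneg.2 ha) (sub_nonneg.2 hb)]
    · constructor
      · intro h
        rw [hn'] at h
        have hmul : ((dt : ℚ) - 1) * ((ds : ℚ) - 1) = 0 := by nlinarith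
        refine ⟨trivial, ?_⟩
        rcases mul_eq_zero.1 hmul with h1 | h1
        · have : (dt : ℚ) = 1 := by linarith [sub_eq_zero.1 h1]
          have hdt' : dt = 1 := by exact_mod_cast this
          exact Or.inl ⟨hdt', by omega⟩
        · have : (ds : ℚ) = 1 := by linarith [sub_eq_zero.1 h1]
          have hds' : ds = 1 := by exact_mod_cast this
          exact Or.inr ⟨by omega, hds'⟩
      · rintro ⟨-, ⟨h1, h2⟩ | ⟨h1, h2⟩⟩ <;>
        · have e1 : (dt : ℚ) = dt := rfl
          have hds2 : ds = n - 1 ∨ ds = 1 := by omega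
          subst h1 h2
          rw [hn']
          ring
  · set S := ∑ i, d i with hSdef
    set Q := ∑ i, d i ^ 2 with hQdef
    have hS1 : 1 ≤ S := le_trans (hd ⟨0, hr⟩)
      (Finset.single_le_sum (fun i _ => Nat.zero_le _) (Finset.mem_univ (⟨0, hr⟩ : Fin r)))
    have hQS : Q ≤ S ^ 2 := by
      calc Q ≤ ∑ i, d i * S := Finset.sum_le_sum fun i _ => by
              have hle : d i ≤ S :=
                Finset.single_le_sum (fun i _ => Nat.zero_le _) (Finset.mem_univ i)
              calc d i ^ 2 = d i * d i := sq (d i)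
                _ ≤ d i * S := Nat.mul_le_mul_left _ hle
        _ = S * S := by rw [← Finset.sum_mul]
        _ = S ^ 2 := (sq S).symm
    have hcast : (∑ i, (d i : ℚ) ^ 2) = (Q : ℚ) := by rw [hQdef]; push_cast; rfl
    have hn' : (n : ℚ) = (dt : ℚ) + (ds : ℚ) + 2 * (S : ℚ) := by exact_mod_cast hsum.symm
    have hsq : (1 : ℚ) ≤ (S : ℚ) := by exact_mod_cast hS1
    have hqq : (Q : ℚ) ≤ (S : ℚ) ^ 2 := by exact_mod_cast hQS
    have ha : (0 : ℚ) ≤ (dt : ℚ) := Nat.cast_nonneg _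
    have hb : (0 : ℚ) ≤ (ds : ℚ) := Nat.cast_nonneg _
    have hstrict : (-1 : ℚ) + (dt : ℚ) * ((dt : ℚ) + 1) / 2 + (ds : ℚ) * ((ds : ℚ) + 1) / 2
        + ∑ i, (d i : ℚ) ^ 2 < (n : ℚ) * ((n : ℚ) - 1) / 2 := by
      rw [hcast, hn']
      nlinarith [mul_nonneg ha hb, mul_nonneg ha (by linarith : (0:ℚ) ≤ 2 * (S:ℚ) - 1),
        mul_nonneg hb (by linarith : (0:ℚ) ≤ 2 * (S:ℚ) - 1),
        mul_self_nonneg ((S : ℚ) - 1)]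
    exact ⟨le_of_lt hstrict, by
      constructor
      · intro h; exact absurd h (ne_of_lt hstrict)
      · rintro ⟨h0, -⟩; omega⟩
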